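/- Let M be a finite-dimensional A-A-bimodule over a finite-dimensional semisimple algebra A with a balanced symplectic form ω. Then any isotropic sub-bimodule S of M has a coisotropic bimodule complement, i.e., there exists a sub-bimodule C with M = S ⊕ C and C^⊥ ⊆ C. -/

import Mathlib

open MulOpposite Module LinearMap

/-- Casimir-type identities obtained from dual bases of an associative symmetric form. -/
lemma casimir_identity {K : Type*} [Field K] {A : Type*} [Ring A] [Algebra K A]
    {V : Type*} [AddCommGroup V] [Module K V]
    {n : ℕ} (x y : Fin n → A) (τ : A →ₗ[K] K)
    (hτ : ∀ u v : A, τ (u * v) = τ (v * u))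
    (E1 : ∀ u : A, ∑ j, τ (y j * u) • x j = u)
    (E2 : ∀ v : A, ∑ j, τ (v * x j) • y j = v)
    (φ : A →ₗ[K] A →ₗ[K] V) (a : A) :
    (∑ i, φ (a * x i) (y i) = ∑ i, φ (x i) (y i * a)) ∧
    (∑ i, φ (x i * a) (y i) = ∑ i, φ (x i) (a * y i)) := by
  have hL : ∀ (u v : A), φ u v = ∑ j, τ (y j * u) • φ (x j) v := by
    intro u v
    conv_lhs => rw [← E1 u]
    rw [map_sum, LinearMap.sum_apply]
    refine Finset.sum_congr rfl fun j _ => ?_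
    rw [map_smul, LinearMap.smul_apply]
  have hR : ∀ (u v : A), φ u v = ∑ j, τ (v * x j) • φ u (y j) := by
    intro u v
    conv_lhs => rw [← E2 v]
    rw [map_sum]
    refine Finset.sum_congr rfl fun j _ => ?_
    rw [map_smul]
  constructor
  · have h1 : ∑ i, φ (a * x i) (y i) = ∑ i, ∑ j, τ (y j * (a * x i)) • φ (x j) (y i) :=
      Finset.sum_congr rfl fun i _ => hL _ _
    have h2 : ∑ i, φ (x i) (y i * a) = ∑ i, ∑ j, τ (y i * a * x j) • φ (x i) (y j) :=
      Finset.sum_congr rfl fun i _ => hR _ _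
    rw [h1, h2, Finset.sum_comm]
    refine Finset.sum_congr rfl fun p _ => Finset.sum_congr rfl fun q _ => ?_
    rw [mul_assoc]
  · have h1 : ∑ i, φ (x i * a) (y i) = ∑ i, ∑ j, τ (y j * (x i * a)) • φ (x j) (y i) :=
      Finset.sum_congr rfl fun i _ => hL _ _
    have h2 : ∑ i, φ (x i) (a * y i) = ∑ i, ∑ j, τ (a * y i * x j) • φ (x i) (y j) :=
      Finset.sum_congr rfl fun i _ => hR _ _
    rw [h1, h2, Finset.sum_comm]
    refine Finset.sum_congr rfl fun p _ => Finset.sum_congr rfl fun q _ => ?_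
    congr 1
    rw [← mul_assoc, hτ (y p * x q) a, mul_assoc]

/-- Every sub-bimodule of a bimodule over a finite-dimensional semisimple algebra in
characteristic zero has a sub-bimodule complement. -/
lemma exists_bimodule_compl
    (K : Type*) [Field K] [CharZero K]
    (A : Type*) [Ring A] [Algebra K A] [FiniteDimensional K A] [IsSemisimpleRing A]
    (M : Type*) [AddCommGroup M] [Module K M]
    [Module A M] [Module Aᵐᵒᵖ M]
    [IsScalarTower K A M] [IsScalarTower K Aᵐᵒᵖ M]
    [SMulCommClass A Aᵐᵒᵖ M]
    (N : Submodule K M)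
    (hNl : ∀ (a : A) (s : M), s ∈ N → a • s ∈ N)
    (hNr : ∀ (a : A) (s : M), s ∈ N → op a • s ∈ N) :
    ∃ N' : Submodule K M,
      (∀ (a : A) (c : M), c ∈ N' → a • c ∈ N') ∧
      (∀ (a : A) (c : M), c ∈ N' → op a • c ∈ N') ∧
      IsCompl N N' := by
  classical
  -- the trace form of the left regular representation
  set τ : A →ₗ[K] K := (LinearMap.trace K A).comp (LinearMap.mul K A) with hτdef
  have happ : ∀ u : A, τ u = LinearMap.trace K A (LinearMap.mul K A u) := fun u => rfl
  have hmul_comp : ∀ u v : A,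
      LinearMap.mul K A (u * v) = (LinearMap.mul K A u) ∘ₗ (LinearMap.mul K A v) := by
    intro u v; ext c; simp [mul_assoc]
  have hτ : ∀ u v : A, τ (u * v) = τ (v * u) := by
    intro u v
    rw [happ, happ, hmul_comp, hmul_comp, LinearMap.trace_comp_comm']
  -- an idempotent endomorphism with zero trace is zero
  have idem_endo : ∀ f : Module.End K A, f ∘ₗ f = f → LinearMap.trace K A f = 0 → f = 0 := by
    intro f hff htr
    have hproj : LinearMap.IsProj (LinearMap.range f) f :=
      ⟨fun x => LinearMap.mem_range_self f x, fun x hx => by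
        obtain ⟨y, rfl⟩ := hx
        exact DFunLike.congr_fun hff y⟩
    have h2 := hproj.trace
    rw [htr] at h2
    have h3 : finrank K (LinearMap.range f) = 0 := by exact_mod_cast h2.symm
    rw [← LinearMap.range_eq_bot]
    exact Submodule.finrank_eq_zero.mp h3
  -- nondegeneracy of the trace form
  have hBnd : ∀ v : A, (∀ u : A, τ (v * u) = 0) → v = 0 := by
    intro v hv
    let I : Ideal A :=
      { carrier := {u : A | ∀ c : A, τ (c * u) = 0}
        add_mem' := fun {p q} hp hq c => by rw [mul_add, map_add, hp c, hq c, add_zero]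
        zero_mem' := fun c => by rw [mul_zero, map_zero]
        smul_mem' := fun r u hu c => by
          have h := hu (c * r)
          rwa [smul_eq_mul, ← mul_assoc c r u] }
    obtain ⟨e, he, hspan⟩ := IsSemisimpleRing.ideal_eq_span_idempotent I
    have heI : e ∈ I := by rw [hspan]; exact Ideal.subset_span (Set.mem_singleton _)
    have htr : LinearMap.trace K A (LinearMap.mul K A e) = 0 := by
      have h := heI 1; rwa [one_mul, happ] at h
    have hLe : (LinearMap.mul K A e) ∘ₗ (LinearMap.mul K A e) = LinearMap.mul K A e := by
      rw [← hmul_comp, he]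
    have he0 : e = 0 := by
      have hf := idem_endo _ hLe htr
      have h1 : LinearMap.mul K A e 1 = 0 := by rw [hf]; rfl
      simpa using h1
    have hIbot : I = ⊥ := by rw [hspan, he0]; simp
    have hvI : v ∈ I := fun c => by rw [hτ c v]; exact hv c
    rw [hIbot] at hvI; simpa using hvI
  -- the bilinear trace form and its dual bases
  set B₀ : LinearMap.BilinForm K A := (LinearMap.mul K A).compr₂ τ with hB₀def
  have hB₀app : ∀ u v : A, B₀ u v = τ (u * v) := fun u v => rfl
  have hB₀nd : B₀.Nondegenerate := ⟨fun v hv => hBnd v fun u => hv u,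
    fun v hv => hBnd v fun u => by rw [hτ]; exact hv u⟩
  have hB₀symm : B₀.IsSymm := ⟨fun u v => by
    simp only [hB₀app]; exact hτ u v⟩
  set b : Basis (Fin (finrank K A)) K A := Module.finBasis K A with hbdef
  obtain ⟨d, hd⟩ : ∃ d : Basis (Fin (finrank K A)) K A, d = B₀.dualBasis hB₀nd b := ⟨_, rfl⟩
  have E1 : ∀ u : A, ∑ j, τ (b j * u) • d j = u := by
    intro u
    conv_rhs => rw [← d.sum_repr u]
    refine Finset.sum_congr rfl fun j _ => ?_
    congr 1
    rw [hd, B₀.dualBasis_repr_apply, hB₀app, hτ]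
  have hBbd : ∀ i j, B₀ (b i) (d j) = if i = j then 1 else 0 := by
    intro i j; rw [hd]; exact B₀.apply_dualBasis_right hB₀nd hB₀symm b i j
  have hrepr : ∀ (v : A) (j), b.repr v j = B₀ v (d j) := by
    intro v j
    conv_rhs => rw [← b.sum_repr v]
    rw [map_sum, LinearMap.sum_apply]
    simp only [map_smul, LinearMap.smul_apply, hBbd, smul_eq_mul, mul_ite, mul_one, mul_zero]
    simp
  have E2 : ∀ v : A, ∑ j, τ (v * d j) • b j = v := by
    intro v
    conv_rhs => rw [← b.sum_repr v]
    refine Finset.sum_congr rfl fun j _ => ?_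
    congr 1
    rw [hrepr, hB₀app]
  -- the Casimir element and its inverse
  obtain ⟨z, hz⟩ : ∃ z : A, z = ∑ i, d i * b i := ⟨_, rfl⟩
  have hzc : ∀ a : A, a * z = z * a := by
    intro a
    have h := (casimir_identity d b τ hτ E1 E2 (LinearMap.mul K A) a).1
    simp only [LinearMap.mul_apply'] at h
    rw [hz, Finset.mul_sum, Finset.sum_mul]
    calc ∑ i, a * (d i * b i) = ∑ i, a * d i * b i := by
          refine Finset.sum_congr rfl fun i _ => ?_; rw [mul_assoc]
      _ = ∑ i, d i * (b i * a) := h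
      _ = ∑ i, d i * b i * a := by
          refine Finset.sum_congr rfl fun i _ => ?_; rw [mul_assoc]
  have hz' : ∑ i, b i * d i = z := by
    rw [hz]
    have hexp : ∀ i, b i = ∑ j, τ (b j * b i) • d j := fun i => (E1 (b i)).symm
    have h1 : ∑ i, b i * d i = ∑ i, ∑ j, τ (b j * b i) • (d j * d i) := by
      refine Finset.sum_congr rfl fun i _ => ?_
      conv_lhs => rw [hexp i]
      rw [Finset.sum_mul]
      exact Finset.sum_congr rfl fun j _ => smul_mul_assoc _ _ _
    have h2 : ∑ i, d i * b i = ∑ i, ∑ j, τ (b j * b i) • (d i * d j) := by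
      refine Finset.sum_congr rfl fun i _ => ?_
      conv_lhs => rw [hexp i]
      rw [Finset.mul_sum]
      exact Finset.sum_congr rfl fun j _ => mul_smul_comm _ _ _
    rw [h1, h2, Finset.sum_comm]
    refine Finset.sum_congr rfl fun p _ => Finset.sum_congr rfl fun q _ => ?_
    rw [hτ]
  have hzinj : ∀ a : A, z * a = 0 → a = 0 := by
    intro a ha
    let I : Ideal A :=
      { carrier := {u : A | ∀ c : A, τ (z * (c * u)) = 0}
        add_mem' := fun {p q} hp hq c => by rw [mul_add, mul_add, map_add, hp c, hq c, add_zero]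
        zero_mem' := fun c => by rw [mul_zero, mul_zero, map_zero]
        smul_mem' := fun r u hu c => by
          have h := hu (c * r)
          rwa [smul_eq_mul, ← mul_assoc c r u] }
    obtain ⟨e, he, hspan⟩ := IsSemisimpleRing.ideal_eq_span_idempotent I
    have heI : e ∈ I := by rw [hspan]; exact Ideal.subset_span (Set.mem_singleton _)
    have htrR : LinearMap.trace K A ((LinearMap.mul K A).flip e) = 0 := by
      rw [LinearMap.trace_eq_matrix_trace K d, Matrix.trace]
      have hdiag : ∀ i, ((LinearMap.toMatrix d d) ((LinearMap.mul K A).flip e)).diag i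
          = τ (e * (b i * d i)) := by
        intro i
        rw [Matrix.diag_apply, LinearMap.toMatrix_apply]
        rw [LinearMap.flip_apply, LinearMap.mul_apply']
        rw [hd, B₀.dualBasis_repr_apply, hB₀app, ← hd]
        rw [mul_assoc, hτ (d i) (e * b i), mul_assoc]
      rw [Finset.sum_congr rfl fun i _ => hdiag i]
      rw [← map_sum, ← Finset.mul_sum, hz', hτ e z]
      have h := heI 1; rwa [one_mul] at h
    have hRe : ((LinearMap.mul K A).flip e) ∘ₗ ((LinearMap.mul K A).flip e)
        = (LinearMap.mul K A).flip e := by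
      ext c
      simp only [LinearMap.comp_apply, LinearMap.flip_apply, LinearMap.mul_apply']
      rw [mul_assoc, he]
    have he0 : e = 0 := by
      have hf := idem_endo _ hRe htrR
      have h1 : (LinearMap.mul K A).flip e 1 = 0 := by rw [hf]; rfl
      simpa using h1
    have hIbot : I = ⊥ := by rw [hspan, he0]; simp
    have haI : a ∈ I := by
      intro c
      rw [← mul_assoc, ← hzc c, mul_assoc, ha, mul_zero, map_zero]
    rw [hIbot] at haI; simpa using haI
  have hzsurj : Function.Surjective (LinearMap.mul K A z) := by
    have hinj : Function.Injective (LinearMap.mul K A z) := by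
      apply (injective_iff_map_eq_zero _).mpr
      intro a ha
      exact hzinj a ha
    exact (LinearMap.injective_iff_surjective).mp hinj
  obtain ⟨w, hw⟩ := hzsurj 1
  have hzw : z * w = 1 := hw
  have hwz : w * z = 1 := by
    have h1 : z * (w * z - 1) = 0 := by
      rw [mul_sub, ← mul_assoc, hzw, one_mul, mul_one, sub_self]
    have h2 := hzinj _ h1
    have := sub_eq_zero.mp h2
    exact this
  have hwc : ∀ a : A, a * w = w * a := by
    intro a
    calc a * w = (w * z) * (a * w) := by rw [hwz, one_mul]
      _ = w * (z * (a * w)) := by rw [mul_assoc]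
      _ = w * ((z * a) * w) := by rw [← mul_assoc z a w]
      _ = w * ((a * z) * w) := by rw [← hzc a]
      _ = w * (a * (z * w)) := by rw [mul_assoc a z w]
      _ = w * a := by rw [hzw, mul_one]
  have hwxy : ∑ i, w * d i * b i = 1 := by
    calc ∑ i, w * d i * b i = ∑ i, w * (d i * b i) := by
          refine Finset.sum_congr rfl fun i _ => ?_; rw [mul_assoc]
      _ = w * z := by rw [← Finset.mul_sum, ← hz]
      _ = 1 := hwz
  have hwyx : ∑ i, w * b i * d i = 1 := by
    calc ∑ i, w * b i * d i = ∑ i, w * (b i * d i) := by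
          refine Finset.sum_congr rfl fun i _ => ?_; rw [mul_assoc]
      _ = w * z := by rw [← Finset.mul_sum, hz']
      _ = 1 := hwz
  -- a K-linear projection onto N
  obtain ⟨N'', hN''⟩ := Submodule.exists_isCompl N
  set p : M →ₗ[K] M := N.subtype ∘ₗ (N.linearProjOfIsCompl N'' hN'') with hpdef
  have hpmem : ∀ m : M, p m ∈ N := fun m => (N.linearProjOfIsCompl N'' hN'' m).2
  have hpid : ∀ n ∈ N, p n = n := by
    intro n hn
    exact congrArg Subtype.val (Submodule.linearProjOfIsCompl_apply_left hN'' ⟨n, hn⟩)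
  -- average over the left action
  obtain ⟨q₁, hq₁⟩ : ∃ q : M →ₗ[K] M, q = ∑ i,
      (DistribMulAction.toLinearMap K M (w * d i)) ∘ₗ p ∘ₗ
        (DistribMulAction.toLinearMap K M (b i)) := ⟨_, rfl⟩
  have hq₁app : ∀ m : M, q₁ m = ∑ i, (w * d i) • p (b i • m) := by
    intro m
    rw [hq₁, LinearMap.sum_apply]
    exact Finset.sum_congr rfl fun i _ => rfl
  have hq₁mem : ∀ m : M, q₁ m ∈ N := by
    intro m; rw [hq₁app]
    exact Submodule.sum_mem _ fun i _ => hNl _ _ (hpmem _)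
  have hq₁id : ∀ n ∈ N, q₁ n = n := by
    intro n hn
    rw [hq₁app]
    have h1 : ∀ i ∈ Finset.univ, (w * d i) • p (b i • n) = (w * d i * b i) • n := by
      intro i _
      rw [hpid _ (hNl _ _ hn), smul_smul]
    rw [Finset.sum_congr rfl h1, ← Finset.sum_smul, hwxy, one_smul]
  have hq₁l : ∀ (a : A) (m : M), q₁ (a • m) = a • q₁ m := by
    intro a m
    set φ : A →ₗ[K] A →ₗ[K] M := LinearMap.mk₂ K (fun u v => (w * u) • p (v • m))
      (fun u₁ u₂ v => by rw [mul_add, add_smul])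
      (fun k u v => by rw [mul_smul_comm, smul_assoc])
      (fun u v₁ v₂ => by rw [add_smul, map_add, smul_add])
      (fun k u v => by rw [smul_assoc, map_smul]; exact smul_comm _ _ _) with hφdef
    have h := (casimir_identity d b τ hτ E1 E2 φ a).1
    have hLHS : ∑ i, φ (a * d i) (b i) = a • q₁ m := by
      rw [hq₁app, Finset.smul_sum]
      refine Finset.sum_congr rfl fun i _ => ?_
      show (w * (a * d i)) • p (b i • m) = a • ((w * d i) • p (b i • m))
      rw [← mul_assoc, ← hwc a, mul_assoc, mul_smul]
    have hRHS : ∑ i, φ (d i) (b i * a) = q₁ (a • m) := by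
      rw [hq₁app]
      refine Finset.sum_congr rfl fun i _ => ?_
      show (w * d i) • p ((b i * a) • m) = (w * d i) • p (b i • (a • m))
      rw [mul_smul (b i) a m]
    rw [← hRHS, ← h, hLHS]
  -- average over the right action
  obtain ⟨q₂, hq₂⟩ : ∃ q : M →ₗ[K] M, q = ∑ i,
      (DistribMulAction.toLinearMap K M (op (d i))) ∘ₗ q₁ ∘ₗ
        (DistribMulAction.toLinearMap K M (op (w * b i))) := ⟨_, rfl⟩
  have hq₂app : ∀ m : M, q₂ m = ∑ i, op (d i) • q₁ (op (w * b i) • m) := by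
    intro m
    rw [hq₂, LinearMap.sum_apply]
    exact Finset.sum_congr rfl fun i _ => rfl
  have hq₂mem : ∀ m : M, q₂ m ∈ N := by
    intro m; rw [hq₂app]
    exact Submodule.sum_mem _ fun i _ => hNr _ _ (hq₁mem _)
  have hq₂id : ∀ n ∈ N, q₂ n = n := by
    intro n hn
    rw [hq₂app]
    have h1 : ∀ i ∈ Finset.univ, op (d i) • q₁ (op (w * b i) • n) = op (w * b i * d i) • n := by
      intro i _
      rw [hq₁id _ (hNr _ _ hn), smul_smul, ← op_mul, mul_assoc]
    rw [Finset.sum_congr rfl h1, ← Finset.sum_smul, ← Finset.op_sum, hwyx, op_one, one_smul]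
  have hq₂l : ∀ (a : A) (m : M), q₂ (a • m) = a • q₂ m := by
    intro a m
    rw [hq₂app, hq₂app, Finset.smul_sum]
    refine Finset.sum_congr rfl fun i _ => ?_
    rw [← smul_comm a (op (w * b i)) m, hq₁l, ← smul_comm a (op (d i))]
  have hq₂r : ∀ (a : A) (m : M), q₂ (op a • m) = op a • q₂ m := by
    intro a m
    set φ : A →ₗ[K] A →ₗ[K] M := LinearMap.mk₂ K (fun u v => op u • q₁ (op (w * v) • m))
      (fun u₁ u₂ v => by rw [op_add, add_smul])
      (fun k u v => by rw [op_smul, smul_assoc])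
      (fun u v₁ v₂ => by rw [mul_add, op_add, add_smul, map_add, smul_add])
      (fun k u v => by rw [mul_smul_comm, op_smul, smul_assoc, map_smul]; exact smul_comm _ _ _)
      with hφdef
    have h := (casimir_identity d b τ hτ E1 E2 φ a).2
    have hLHS : ∑ i, φ (d i * a) (b i) = op a • q₂ m := by
      rw [hq₂app, Finset.smul_sum]
      refine Finset.sum_congr rfl fun i _ => ?_
      show op (d i * a) • q₁ (op (w * b i) • m) = op a • (op (d i) • q₁ (op (w * b i) • m))
      rw [op_mul, mul_smul]
    have hRHS : ∑ i, φ (d i) (a * b i) = q₂ (op a • m) := by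
      rw [hq₂app]
      refine Finset.sum_congr rfl fun i _ => ?_
      show op (d i) • q₁ (op (w * (a * b i)) • m) = op (d i) • q₁ (op (w * b i) • (op a • m))
      rw [smul_smul, ← op_mul, ← mul_assoc a w (b i), hwc a, mul_assoc w a (b i)]
    rw [← hRHS, ← h, hLHS]
  -- conclude
  have hproj : LinearMap.IsProj N q₂ := ⟨hq₂mem, hq₂id⟩
  refine ⟨LinearMap.ker q₂, ?_, ?_, hproj.isCompl⟩
  · intro a c hc
    rw [LinearMap.mem_ker] at hc ⊢
    rw [hq₂l, hc, smul_zero]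
  · intro a c hc
    rw [LinearMap.mem_ker] at hc ⊢
    rw [hq₂r, hc, smul_zero]

theorem stmt_2 (K : Type*) [Field K] [IsAlgClosed K] [CharZero K]
    (A : Type*) [Ring A] [Algebra K A] [FiniteDimensional K A] [IsSemisimpleRing A]
    (M : Type*) [AddCommGroup M] [Module K M] [FiniteDimensional K M]
    [Module A M] [Module Aᵐᵒᵖ M]
    [IsScalarTower K A M] [IsScalarTower K Aᵐᵒᵖ M]
    [SMulCommClass A Aᵐᵒᵖ M]
    (ω : M →ₗ[K] M →ₗ[K] K)
    (halt : ∀ x : M, ω x x = 0)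
    (hnd : ∀ x : M, (∀ y : M, ω x y = 0) → x = 0)
    (hbal : ∀ (a : A) (x y : M), ω x (a • y) = ω (op a • x) y)
    (S : Submodule K M)
    (hSl : ∀ (a : A) (s : M), s ∈ S → a • s ∈ S)
    (hSr : ∀ (a : A) (s : M), s ∈ S → op a • s ∈ S)
    (hSiso : ∀ s ∈ S, ∀ s' ∈ S, ω s s' = 0) :
    ∃ C : Submodule K M,
      (∀ (a : A) (c : M), c ∈ C → a • c ∈ C) ∧
      (∀ (a : A) (c : M), c ∈ C → op a • c ∈ C) ∧
      IsCompl S C ∧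
      (∀ m : M, (∀ c ∈ C, ω m c = 0) → m ∈ C) := by
  classical
  have hskew : ∀ x y : M, ω x y = -ω y x := by
    intro x y
    have h := halt (x + y)
    simp only [map_add, LinearMap.add_apply, halt x, halt y, zero_add, add_zero] at h
    exact eq_neg_of_add_eq_zero_right h
  have hAlt : LinearMap.IsAlt ω := halt
  have hrefl : LinearMap.IsRefl ω := hAlt.isRefl
  have hnd' : LinearMap.BilinForm.Nondegenerate ω := ⟨hnd, fun y hy => hnd y fun x => hrefl _ _ (hy x)⟩
  have hbal2 : ∀ (a : A) (x y : M), ω x (op a • y) = ω (a • x) y := by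
    intro a x y
    calc ω x (op a • y) = -ω (op a • y) x := hskew _ _
      _ = -ω y (a • x) := by rw [← hbal a y x]
      _ = ω (a • x) y := (hskew _ _).symm
  -- closure of orthogonal complements
  have horth : ∀ U : Submodule K M,
      (∀ (a : A) (s : M), s ∈ U → a • s ∈ U) → (∀ (a : A) (s : M), s ∈ U → op a • s ∈ U) →
      ((∀ (a : A) (c : M), c ∈ LinearMap.BilinForm.orthogonal ω U → a • c ∈ LinearMap.BilinForm.orthogonal ω U) ∧
       (∀ (a : A) (c : M), c ∈ LinearMap.BilinForm.orthogonal ω U → op a • c ∈ LinearMap.BilinForm.orthogonal ω U)) := by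
    intro U hUl hUr
    constructor
    · intro a c hc u hu
      show ω u (a • c) = 0
      rw [hbal a u c]
      exact hc _ (hUr a u hu)
    · intro a c hc u hu
      show ω u (op a • c) = 0
      rw [hbal2 a u c]
      exact hc _ (hUl a u hu)
  -- S⊥
  have hSSp : S ≤ LinearMap.BilinForm.orthogonal ω S := by
    intro s hs u hu
    exact hSiso u hu s hs
  obtain ⟨hSpl, hSpr⟩ := horth S hSl hSr
  -- T : a sub-bimodule complement of S inside S⊥
  obtain ⟨T0, hT0l, hT0r, hT0⟩ := exists_bimodule_compl K A M S hSl hSr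
  set T : Submodule K M := T0 ⊓ LinearMap.BilinForm.orthogonal ω S with hTdef
  have hTl : ∀ (a : A) (c : M), c ∈ T → a • c ∈ T := by
    intro a c hc
    exact ⟨hT0l a c hc.1, hSpl a c hc.2⟩
  have hTr : ∀ (a : A) (c : M), c ∈ T → op a • c ∈ T := by
    intro a c hc
    exact ⟨hT0r a c hc.1, hSpr a c hc.2⟩
  have hST_bot : S ⊓ T = ⊥ := by
    rw [eq_bot_iff]
    intro x hx
    exact hT0.disjoint.le_bot ⟨hx.1, hx.2.1⟩
  have hST_sup : S ⊔ T = LinearMap.BilinForm.orthogonal ω S := by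
    rw [hTdef, ← sup_inf_assoc_of_le T0 hSSp, codisjoint_iff.mp hT0.codisjoint, top_inf_eq]
  -- T is a nondegenerate subspace
  have hTperp : ∀ t ∈ T, (∀ t' ∈ T, ω t t' = 0) → t = 0 := by
    intro t ht h
    have htSp : t ∈ LinearMap.BilinForm.orthogonal ω S := ht.2
    have h1 : t ∈ LinearMap.BilinForm.orthogonal ω (LinearMap.BilinForm.orthogonal ω S) := by
      intro u hu
      rw [← hST_sup] at hu
      obtain ⟨s, hs, t', ht', rfl⟩ := Submodule.mem_sup.mp hu
      have e1 : ω s t = 0 := htSp s hs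
      have e2 : ω t' t = 0 := hrefl t t' (h t' ht')
      show ω (s + t') t = 0
      rw [map_add, LinearMap.add_apply, e1, e2, add_zero]
    rw [LinearMap.BilinForm.orthogonal_orthogonal hnd' hrefl S] at h1
    have h2 : t ∈ S ⊓ T := ⟨h1, ht⟩
    rw [hST_bot] at h2
    simpa using h2
  -- V = T⊥
  have hTnd : LinearMap.BilinForm.Nondegenerate (LinearMap.BilinForm.restrict ω T) := by
    refine (LinearMap.IsRefl.nondegenerate_iff_separatingLeft (B := LinearMap.BilinForm.restrict ω T)
      (fun x y h => hrefl x y h)).mpr ?_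
    intro x hx
    refine Subtype.ext (hTperp x.1 x.2 fun t' ht' => ?_)
    exact hx ⟨t', ht'⟩
  have hTV : IsCompl T (LinearMap.BilinForm.orthogonal ω T) :=
    LinearMap.BilinForm.isCompl_orthogonal_of_restrict_nondegenerate hrefl hTnd
  obtain ⟨hVl, hVr⟩ := horth T hTl hTr
  have hSV : S ≤ LinearMap.BilinForm.orthogonal ω T := by
    intro s hs t ht
    exact hrefl s t (ht.2 s hs)
  -- W : a sub-bimodule complement of S inside V
  obtain ⟨W0, hW0l, hW0r, hW0⟩ := exists_bimodule_compl K A M S hSl hSr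
  set W : Submodule K M := W0 ⊓ LinearMap.BilinForm.orthogonal ω T with hWdef
  have hWl : ∀ (a : A) (c : M), c ∈ W → a • c ∈ W := by
    intro a c hc
    exact ⟨hW0l a c hc.1, hVl a c hc.2⟩
  have hWr : ∀ (a : A) (c : M), c ∈ W → op a • c ∈ W := by
    intro a c hc
    exact ⟨hW0r a c hc.1, hVr a c hc.2⟩
  have hSW_bot : S ⊓ W = ⊥ := by
    rw [eq_bot_iff]
    intro x hx
    exact hW0.disjoint.le_bot ⟨hx.1, hx.2.1⟩
  have hSW_sup : S ⊔ W = LinearMap.BilinForm.orthogonal ω T := by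
    rw [hWdef, ← sup_inf_assoc_of_le W0 hSV, codisjoint_iff.mp hW0.codisjoint, top_inf_eq]
  have hWV : W ≤ LinearMap.BilinForm.orthogonal ω T := inf_le_right
  -- dimension count
  have hrk : finrank K W = finrank K S := by
    have h1 := Submodule.finrank_sup_add_finrank_inf_eq S T
    rw [hST_sup, hST_bot, finrank_bot, add_zero] at h1
    have h2 := Submodule.finrank_sup_add_finrank_inf_eq S W
    rw [hSW_sup, hSW_bot, finrank_bot, add_zero] at h2
    have h3 := LinearMap.BilinForm.finrank_orthogonal hnd' S
    have h4 := LinearMap.BilinForm.finrank_orthogonal hnd' T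
    have h5 : finrank K S ≤ finrank K M := Submodule.finrank_le S
    have h6 : finrank K T ≤ finrank K M := Submodule.finrank_le T
    omega
  -- the duality S ≃ W*
  obtain ⟨φ₀, hφ₀⟩ : ∃ f : ↥S →ₗ[K] Module.Dual K ↥W,
      f = (ω.domRestrict S).compl₂ W.subtype := ⟨_, rfl⟩
  have hφ₀app : ∀ (s : ↥S) (u : ↥W), φ₀ s u = ω s u := by
    intro s u; rw [hφ₀]; rfl
  have hφinj : Function.Injective φ₀ := by
    apply (injective_iff_map_eq_zero _).mpr
    intro s hs
    have hent : ∀ u : M, u ∈ W → ω (s : M) u = 0 := by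
      intro u hu
      have h1 := DFunLike.congr_fun hs (⟨u, hu⟩ : ↥W)
      rw [hφ₀app] at h1
      simpa using h1
    have hall : ∀ u : M, ω u (s : M) = 0 := by
      intro u
      have hmem : u ∈ T ⊔ LinearMap.BilinForm.orthogonal ω T := by
        rw [codisjoint_iff.mp hTV.codisjoint]; trivial
      obtain ⟨t, ht, v, hv, rfl⟩ := Submodule.mem_sup.mp hmem
      rw [← hSW_sup] at hv
      obtain ⟨s', hs', u', hu', rfl⟩ := Submodule.mem_sup.mp hv
      have e1 : ω t (s : M) = 0 := hSV s.2 t ht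
      have e2 : ω s' (s : M) = 0 := hSiso s' hs' s s.2
      have e3 : ω u' (s : M) = 0 := hrefl _ _ (hent u' hu')
      show ω (t + (s' + u')) (s : M) = 0
      rw [map_add, map_add, LinearMap.add_apply, LinearMap.add_apply, e1, e2, e3]
      ring
    refine Subtype.ext (hnd (s : M) fun y => ?_)
    rw [hskew, hall y, neg_zero]
  have hφbij : Function.Bijective φ₀ := by
    refine ⟨hφinj, (LinearMap.injective_iff_surjective_of_finrank_eq_finrank ?_).mp hφinj⟩
    rw [Subspace.dual_finrank_eq, hrk]
  set eφ := LinearEquiv.ofBijective φ₀ hφbij with heφ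
  obtain ⟨h, hh⟩ : ∃ h : ↥W →ₗ[K] ↥S,
      h = eφ.symm.toLinearMap ∘ₗ ((-(2:K)⁻¹) • ((ω.domRestrict W).compl₂ W.subtype)) := ⟨_, rfl⟩
  have hkey : ∀ u u' : ↥W, ω (h u) u' = -(2:K)⁻¹ * ω u u' := by
    intro u u'
    have h1 : φ₀ (h u) = ((-(2:K)⁻¹) • ((ω.domRestrict W).compl₂ W.subtype)) u := by
      rw [hh]
      exact eφ.apply_symm_apply _
    have h2 := DFunLike.congr_fun h1 u'
    rw [hφ₀app] at h2
    simpa using h2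
  -- equivariance of h
  have hequiv_l : ∀ (a : A) (u : ↥W),
      (h ⟨a • (u : M), hWl a _ u.2⟩ : M) = a • (h u : M) := by
    intro a u
    have hmemS : a • ((h u : M)) ∈ S := hSl a _ (h u).2
    have heq : φ₀ (h ⟨a • (u : M), hWl a _ u.2⟩) = φ₀ ⟨a • (h u : M), hmemS⟩ := by
      apply LinearMap.ext
      intro u'
      rw [hφ₀app, hφ₀app]
      have hop : op a • (u' : M) ∈ W := hWr a _ u'.2
      calc ω ((h ⟨a • (u : M), hWl a _ u.2⟩ : ↥S) : M) (u' : M)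
          = -(2:K)⁻¹ * ω (a • (u : M)) (u' : M) := hkey _ _
        _ = -(2:K)⁻¹ * ω (u : M) (op a • (u' : M)) := by rw [hbal2]
        _ = ω (h u : M) (op a • (u' : M)) := (hkey u ⟨_, hop⟩).symm
        _ = ω (a • (h u : M)) (u' : M) := hbal2 a _ _
    exact congrArg Subtype.val (hφinj heq)
  have hequiv_r : ∀ (a : A) (u : ↥W),
      (h ⟨op a • (u : M), hWr a _ u.2⟩ : M) = op a • (h u : M) := by
    intro a u
    have hmemS : op a • ((h u : M)) ∈ S := hSr a _ (h u).2
    have heq : φ₀ (h ⟨op a • (u : M), hWr a _ u.2⟩) = φ₀ ⟨op a • (h u : M), hmemS⟩ := by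
      apply LinearMap.ext
      intro u'
      rw [hφ₀app, hφ₀app]
      have hop : a • (u' : M) ∈ W := hWl a _ u'.2
      calc ω ((h ⟨op a • (u : M), hWr a _ u.2⟩ : ↥S) : M) (u' : M)
          = -(2:K)⁻¹ * ω (op a • (u : M)) (u' : M) := hkey _ _
        _ = -(2:K)⁻¹ * ω (u : M) (a • (u' : M)) := by rw [hbal]
        _ = ω (h u : M) (a • (u' : M)) := (hkey u ⟨_, hop⟩).symm
        _ = ω (op a • (h u : M)) (u' : M) := hbal a _ _
    exact congrArg Subtype.val (hφinj heq)
  -- the graph of h over W, and C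
  obtain ⟨ρ, hρ⟩ : ∃ ρ : ↥W →ₗ[K] M, ρ = W.subtype + S.subtype ∘ₗ h := ⟨_, rfl⟩
  have hρapp : ∀ u : ↥W, ρ u = (u : M) + (h u : M) := by
    intro u; rw [hρ]; rfl
  refine ⟨T ⊔ LinearMap.range ρ, ?_, ?_, ?_, ?_⟩
  · -- left closure
    intro a c hc
    obtain ⟨t, ht, g, hg, rfl⟩ := Submodule.mem_sup.mp hc
    obtain ⟨u, rfl⟩ := hg
    rw [smul_add]
    refine Submodule.add_mem _ (Submodule.mem_sup_left (hTl a t ht)) (Submodule.mem_sup_right ?_)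
    have hmem : a • ρ u = ρ ⟨a • (u : M), hWl a _ u.2⟩ := by
      rw [hρapp, hρapp, smul_add, hequiv_l]
    rw [hmem]
    exact LinearMap.mem_range_self ρ _
  · -- right closure
    intro a c hc
    obtain ⟨t, ht, g, hg, rfl⟩ := Submodule.mem_sup.mp hc
    obtain ⟨u, rfl⟩ := hg
    rw [smul_add]
    refine Submodule.add_mem _ (Submodule.mem_sup_left (hTr a t ht)) (Submodule.mem_sup_right ?_)
    have hmem : op a • ρ u = ρ ⟨op a • (u : M), hWr a _ u.2⟩ := by
      rw [hρapp, hρapp, smul_add, hequiv_r]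
    rw [hmem]
    exact LinearMap.mem_range_self ρ _
  · -- IsCompl
    constructor
    · rw [Submodule.disjoint_def]
      intro x hxS hxC
      obtain ⟨t, ht, g, hg, hsum⟩ := Submodule.mem_sup.mp hxC
      obtain ⟨u, rfl⟩ := hg
      have htval : t = x - (h u : M) - (u : M) := by
        rw [← hsum, hρapp]; abel
      have htV : t ∈ LinearMap.BilinForm.orthogonal ω T := by
        rw [htval]
        exact Submodule.sub_mem _ (Submodule.sub_mem _ (hSV hxS) (hSV (h u).2)) (hWV u.2)
      have ht0 : t = 0 := by
        have := hTV.disjoint.le_bot (⟨ht, htV⟩ : t ∈ T ⊓ LinearMap.BilinForm.orthogonal ω T)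
        simpa using this
      have hxρ : x = (u : M) + (h u : M) := by
        rw [← hsum, ht0, zero_add, hρapp]
      have huS : (u : M) ∈ S := by
        have huval : (u : M) = x - (h u : M) := by rw [hxρ]; abel
        rw [huval]
        exact Submodule.sub_mem _ hxS (h u).2
      have hu0 : (u : M) ∈ S ⊓ W := ⟨huS, u.2⟩
      rw [hSW_bot] at hu0
      have hu0' : u = 0 := Subtype.ext (by simpa using hu0)
      rw [hxρ, hu0']
      simp
    · rw [codisjoint_iff, eq_top_iff]
      rintro m -
      have hmem : m ∈ T ⊔ LinearMap.BilinForm.orthogonal ω T := by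
        rw [codisjoint_iff.mp hTV.codisjoint]; trivial
      obtain ⟨t, ht, v, hv, rfl⟩ := Submodule.mem_sup.mp hmem
      rw [← hSW_sup] at hv
      obtain ⟨s, hs, u, hu, rfl⟩ := Submodule.mem_sup.mp hv
      have hdec : t + (s + u) = (s - (h ⟨u, hu⟩ : M)) + (t + ρ ⟨u, hu⟩) := by
        rw [hρapp]
        show t + (s + u) = s - (h ⟨u, hu⟩ : M) + (t + (u + (h ⟨u, hu⟩ : M)))
        abel
      rw [hdec]
      exact Submodule.add_mem _
        (Submodule.mem_sup_left (S.sub_mem hs (h ⟨u, hu⟩).2))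
        (Submodule.mem_sup_right (Submodule.add_mem _ (Submodule.mem_sup_left ht)
          (Submodule.mem_sup_right (LinearMap.mem_range_self ρ _))))
  · -- coisotropy
    intro m hm
    have hmem : m ∈ T ⊔ LinearMap.BilinForm.orthogonal ω T := by
      rw [codisjoint_iff.mp hTV.codisjoint]; trivial
    obtain ⟨t, ht, v, hv, rfl⟩ := Submodule.mem_sup.mp hmem
    rw [← hSW_sup] at hv
    obtain ⟨s, hs, u, hu, rfl⟩ := Submodule.mem_sup.mp hv
    have hpair : ∀ u' : ↥W, ω s (u' : M) = ω (h ⟨u, hu⟩ : M) (u' : M) := by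
      intro u'
      have hc : ρ u' ∈ T ⊔ LinearMap.range ρ :=
        Submodule.mem_sup_right (LinearMap.mem_range_self ρ u')
      have h0 := hm _ hc
      rw [hρapp] at h0
      have e1 : ω t (u' : M) = 0 := u'.2.2 t ht
      have e2 : ω t (h u' : M) = 0 := (hSV (h u').2) t ht
      have e3 : ω s (h u' : M) = 0 := hSiso s hs _ (h u').2
      have e4 : ω u (h u' : M) = -(-(2:K)⁻¹ * ω (u' : M) u) := by
        rw [hskew u ((h u' : M))]
        rw [hkey u' ⟨u, hu⟩]
      have e5 : ω (u' : M) u = -ω u (u' : M) := hskew _ _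
      simp only [map_add, LinearMap.add_apply] at h0
      rw [e1, e2, e3] at h0
      rw [e5] at e4
      rw [e4] at h0
      rw [hkey ⟨u, hu⟩ u']
      show (ω s) ↑u' = -(2:K)⁻¹ * (ω u) ↑u'
      linear_combination h0
    have hseq : s = (h ⟨u, hu⟩ : M) := by
      have heq : φ₀ ⟨s, hs⟩ = φ₀ (h ⟨u, hu⟩) := by
        apply LinearMap.ext
        intro u'
        rw [hφ₀app, hφ₀app]
        exact hpair u'
      exact congrArg Subtype.val (hφinj heq)
    have hfin : t + (s + u) = t + ρ ⟨u, hu⟩ := by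
      rw [hρapp, hseq]
      show t + ((h ⟨u, hu⟩ : M) + u) = t + (u + (h ⟨u, hu⟩ : M))
      abel
    rw [hfin]
    exact Submodule.add_mem _ (Submodule.mem_sup_left ht)
      (Submodule.mem_sup_right (LinearMap.mem_range_self ρ _))
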